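/- For real Q ≠ 0 and κ = |Q|/√(Q²+4), the solution U of the equation obtained from the system: ((κ²Ū+2κ+Ū)/(√2|1+κU|√(1-κ²)))·b = Q-i and (i√(1-κ²)Ū/(√2|1+κU|))·b = 1 (eliminating b), namely U = (-2κ² + Qi - κ²Qi)/(2κ), equals (Q/|Q|)·(-Q+2i)/√(Q²+4). -/

import Mathlib

theorem U_formula_simplification (Q : ℝ) (hQ : Q ≠ 0) :
    let κ : ℝ := |Q| / Real.sqrt (Q ^ 2 + 4)
    (-2 * (κ : ℂ) ^ 2 + (Q : ℂ) * Complex.I - (κ : ℂ) ^ 2 * (Q : ℂ) * Complex.I) /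
        (2 * (κ : ℂ))
      = ((Q / |Q| : ℝ) : ℂ) *
        ((-(Q : ℂ) + 2 * Complex.I) / ((Real.sqrt (Q ^ 2 + 4) : ℝ) : ℂ)) := by
  intro κ
  have hs2 : Real.sqrt (Q ^ 2 + 4) ^ 2 = Q ^ 2 + 4 := Real.sq_sqrt (by positivity)
  have hs0 : Real.sqrt (Q ^ 2 + 4) ≠ 0 := by positivity
  have haQ : |Q| ≠ 0 := abs_ne_zero.mpr hQ
  have hκ : κ = |Q| / Real.sqrt (Q ^ 2 + 4) := rfl
  have hC2 : ((|Q| : ℝ) : ℂ) ^ 2 = (Q : ℂ) ^ 2 := by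
    exact_mod_cast congrArg Complex.ofReal (sq_abs Q)
  have h4 : ((Real.sqrt (4 + Q ^ 2) : ℝ) : ℂ) ^ 2 = (Q : ℂ) ^ 2 + 4 := by
    have : Real.sqrt (4 + Q ^ 2) ^ 2 = Q ^ 2 + 4 := by
      rw [Real.sq_sqrt (by positivity)]; ring
    exact_mod_cast congrArg Complex.ofReal this
  have hCs0 : ((Real.sqrt (Q ^ 2 + 4) : ℝ) : ℂ) ≠ 0 := by exact_mod_cast hs0
  have hCaQ : ((|Q| : ℝ) : ℂ) ≠ 0 := by exact_mod_cast haQ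
  rw [hκ]
  push_cast
  field_simp
  ring_nf
  rw [h4]
  linear_combination (-((Q : ℂ) * Complex.I) - 2) * hC2
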